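/- Let $V$ be a real inner product space and $q>0$ an integer. Let $0=t^0<\cdots<t^N=T$ and let $\varphi\in H^1(0,T)$ (continuously differentiable suffices). Define $\tilde{\mathcal P}^{\Delta t}\varphi$ to be the unique piecewise polynomial of degree $\le q$ on each $(t^{k-1},t^k)$ satisfying $\int_{t^{k-1}}^{t^k}(\tilde{\mathcal P}^{\Delta t}\varphi - \varphi)w = 0$ for all polynomials $w$ of degree $\le q-1$, and $(\tilde{\mathcal P}^{\Delta t}\varphi)(t^{k,-}) = \varphi(t^k)$, with $(\tilde{\mathcal P}^{\Delta t}\varphi)_0^- = \varphi(0)$. Then for every piecewise polynomial $w$ of degree $\le q$ on the same partition, $\int_0^T \partial_t\varphi\, w = \int_0^T \tilde\partial_t(\tilde{\mathcal P}^{\Delta t}\varphi)\, w$, where $\tilde\partial_t$ is the DG time derivative defined by $\int_0^T \tilde\partial_t\psi\,w = \sum_{k=1}^N\int_{t^{k-1}}^{t^k}\partial_t\psi\,w + \sum_{k=1}^N[\psi]_{k-1}w_{k-1}^+$. -/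

import Mathlib

open Finset intervalIntegral Polynomial

private lemma deg_deriv_lt {q : ℕ} (hq : 0 < q) (W : Polynomial ℝ)
    (hW : W.natDegree ≤ q) : (Polynomial.derivative W).degree < (q : ℕ) := by
  by_cases h : W = 0
  · simp [h]
  · exact lt_of_lt_of_le (Polynomial.degree_derivative_lt h)
      (le_trans (Polynomial.degree_le_natDegree) (by exact_mod_cast hW))

private lemma key_interval (q : ℕ) (hq : 0 < q) (a b : ℝ)
    (φ : ℝ → ℝ) (hφ : ContDiff ℝ 1 φ)
    (P W : Polynomial ℝ) (hW : W.natDegree ≤ q)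
    (horth : ∀ w : Polynomial ℝ, w.degree < (q : ℕ) →
      ∫ x in a..b, (P.eval x - φ x) * w.eval x = 0)
    (hend : P.eval b = φ b) :
    ∫ x in a..b, deriv φ x * W.eval x
      = (∫ x in a..b, (Polynomial.derivative P).eval x * W.eval x)
        + (P.eval a - φ a) * W.eval a := by
  have hφd : Differentiable ℝ φ := hφ.differentiable one_ne_zero
  have hφc : Continuous (deriv φ) := hφ.continuous_deriv le_rfl
  set g : ℝ → ℝ := fun x => φ x - P.eval x with hg
  set g' : ℝ → ℝ := fun x => deriv φ x - (Polynomial.derivative P).eval x with hg'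
  have hgd : ∀ x ∈ Set.uIcc a b, HasDerivAt g (g' x) x := fun x _ =>
    ((hφd x).hasDerivAt).sub (P.hasDerivAt x)
  have hWd : ∀ x ∈ Set.uIcc a b, HasDerivAt (fun y => W.eval y)
      ((Polynomial.derivative W).eval x) x := fun x _ => W.hasDerivAt x
  have hInt1 : IntervalIntegrable (fun x => (Polynomial.derivative W).eval x)
      MeasureTheory.volume a b := (W.derivative.continuous).intervalIntegrable a b
  have hInt2 : IntervalIntegrable g' MeasureTheory.volume a b :=
    (hφc.sub (Polynomial.derivative P).continuous).intervalIntegrable a b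
  have hparts := intervalIntegral.integral_mul_deriv_eq_deriv_mul
    hWd hgd hInt1 hInt2
  -- hparts : ∫ x in a..b, W.eval x * g' x = W.eval b * g b - W.eval a * g a
  --            - ∫ x in a..b, (derivative W).eval x * g x
  have hgb : g b = 0 := by simp [hg, hend]
  have hzero : (∫ x in a..b, (Polynomial.derivative W).eval x * g x) = 0 := by
    have := horth (Polynomial.derivative W) (deg_deriv_lt hq W hW)
    calc (∫ x in a..b, (Polynomial.derivative W).eval x * g x)
        = -∫ x in a..b, (P.eval x - φ x) * (Polynomial.derivative W).eval x := by
          rw [← intervalIntegral.integral_neg]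
          congr 1; ext x; simp [hg]; ring
      _ = 0 := by rw [this]; simp
  rw [hgb, hzero] at hparts
  have hsplit : (∫ x in a..b, deriv φ x * W.eval x)
      - (∫ x in a..b, (Polynomial.derivative P).eval x * W.eval x)
      = ∫ x in a..b, W.eval x * g' x := by
    rw [← intervalIntegral.integral_sub (f := fun x => deriv φ x * W.eval x)
        (g := fun x => (Polynomial.derivative P).eval x * W.eval x)
      ((hφc.mul W.continuous : Continuous fun x => deriv φ x * W.eval x).intervalIntegrable a b)
      (((Polynomial.derivative P).continuous.mul W.continuous :
        Continuous fun x => (Polynomial.derivative P).eval x * W.eval x).intervalIntegrable a b)]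
    congr 1; ext x; simp [hg']; ring
  have : (∫ x in a..b, deriv φ x * W.eval x)
      - (∫ x in a..b, (Polynomial.derivative P).eval x * W.eval x)
      = (P.eval a - φ a) * W.eval a := by
    rw [hsplit, hparts]; simp [hg]; ring
  linarith [this]

theorem tilde_P_time_derivative_orthogonality
    (q : ℕ) (hq : 0 < q)
    (N : ℕ) (hN : 0 < N) (T : ℝ) (t : ℕ → ℝ)
    (ht0 : t 0 = 0) (htN : t N = T)
    (hmono : ∀ k < N, t k < t (k + 1))
    (φ : ℝ → ℝ) (hφ : ContDiff ℝ 1 φ)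
    (P : ℕ → Polynomial ℝ)
    (hPdeg : ∀ k, (P k).natDegree ≤ q)
    (hPorth : ∀ k < N, ∀ w : Polynomial ℝ, w.degree < (q : ℕ) →
      ∫ x in t k..t (k + 1), ((P k).eval x - φ x) * w.eval x = 0)
    (hPend : ∀ k < N, (P k).eval (t (k + 1)) = φ (t (k + 1)))
    (W : ℕ → Polynomial ℝ)
    (hW : ∀ k, (W k).natDegree ≤ q) :
    ∑ k ∈ Finset.range N, ∫ x in t k..t (k + 1), deriv φ x * (W k).eval x
      = (∑ k ∈ Finset.range N,
          ∫ x in t k..t (k + 1), (Polynomial.derivative (P k)).eval x * (W k).eval x)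
        + ∑ k ∈ Finset.range N,
            ((P k).eval (t k) - (if k = 0 then φ 0 else (P (k - 1)).eval (t k)))
              * (W k).eval (t k) := by
  rw [← Finset.sum_add_distrib]
  apply Finset.sum_congr rfl
  intro k hk
  have hkN : k < N := Finset.mem_range.mp hk
  have hφtk : (if k = 0 then φ 0 else (P (k - 1)).eval (t k)) = φ (t k) := by
    by_cases h : k = 0
    · simp [h, ht0]
    · have hk1 : k - 1 < N := lt_of_le_of_lt (Nat.sub_le k 1) hkN
      have := hPend (k - 1) hk1
      rw [if_neg h]
      rwa [show k - 1 + 1 = k from by omega] at this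
  rw [hφtk]
  exact key_interval q hq (t k) (t (k + 1)) φ hφ (P k) (W k) (hW k)
    (hPorth k hkN) (hPend k hkN)
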